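/- For every convex function f : ℝ → ℝ and every test function φ ∈ C²_c(ℝ), ∫_ℝ φ''(x) f(x) dx = ∫_ℝ φ(x) μ(dx), where μ is the measure defined by μ[a, b) = f'_−(b) − f'_−(a). -/

import Mathlib

open MeasureTheory

/-- Left derivative. -/
noncomputable def leftDeriv (f : ℝ → ℝ) (x : ℝ) : ℝ := derivWithin f (Set.Iio x) x


open Set

lemma hasDerivWithinAt_leftDeriv {f : ℝ → ℝ} (hf : ConvexOn ℝ Set.univ f) (x : ℝ) :
    HasDerivWithinAt f (leftDeriv f x) (Set.Iio x) x := by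
  have hmono : MonotoneOn (slope f x) (Iio x) := by
    intro a ha b hb hab
    exact hf.slope_mono (mem_univ x) ⟨mem_univ a, ne_of_lt ha⟩ ⟨mem_univ b, ne_of_lt hb⟩ hab
  have hbdd : BddAbove (slope f x '' Iio x) := by
    refine ⟨slope f x (x + 1), ?_⟩
    rintro _ ⟨y, hy, rfl⟩
    exact hf.slope_mono (mem_univ x) ⟨mem_univ y, ne_of_lt hy⟩
      ⟨mem_univ (x+1), by simp⟩ (le_of_lt (lt_trans hy (by linarith)))
  have htend := hmono.tendsto_nhdsLT hbdd
  have hL : HasDerivWithinAt f (sSup (slope f x '' Iio x)) (Set.Iio x) x := by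
    rw [hasDerivWithinAt_iff_tendsto_slope]
    rwa [Set.diff_singleton_eq_self (by simp : x ∉ Iio x)]
  have : leftDeriv f x = sSup (slope f x '' Iio x) :=
    hL.derivWithin (uniqueDiffWithinAt_Iio x)
  rwa [this]

lemma leftDeriv_le_slope {f : ℝ → ℝ} (hf : ConvexOn ℝ Set.univ f) {x y : ℝ} (hxy : x < y) :
    leftDeriv f x ≤ slope f x y := by
  have hL := (hasDerivWithinAt_leftDeriv hf x)
  have htend : Filter.Tendsto (slope f x) (nhdsWithin x (Iio x)) (nhds (leftDeriv f x)) := by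
    have := hasDerivWithinAt_iff_tendsto_slope.mp hL
    rwa [Set.diff_singleton_eq_self (by simp : x ∉ Iio x)] at this
  refine le_of_tendsto htend ?_
  filter_upwards [self_mem_nhdsWithin] with z hz
  exact hf.slope_mono (mem_univ x) ⟨mem_univ z, ne_of_lt hz⟩
    ⟨mem_univ y, ne_of_gt hxy⟩ (le_of_lt (lt_trans hz hxy))

lemma slope_le_leftDeriv {f : ℝ → ℝ} (hf : ConvexOn ℝ Set.univ f) {x y : ℝ} (hxy : x < y) :
    slope f x y ≤ leftDeriv f y :=
  hf.slope_le_leftDeriv (mem_univ x) (mem_univ y) hxy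
    (hasDerivWithinAt_leftDeriv hf y).differentiableWithinAt

lemma leftDeriv_mono {f : ℝ → ℝ} (hf : ConvexOn ℝ Set.univ f) : Monotone (leftDeriv f) := by
  intro x y hxy
  rcases eq_or_lt_of_le hxy with rfl | h
  · exact le_rfl
  · exact (leftDeriv_le_slope hf h).trans (slope_le_leftDeriv hf h)

lemma leftDeriv_sandwich {f : ℝ → ℝ} (hf : ConvexOn ℝ Set.univ f) {u v : ℝ} (huv : u ≤ v) :
    leftDeriv f u * (v - u) ≤ f v - f u ∧ f v - f u ≤ leftDeriv f v * (v - u) := by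
  rcases eq_or_lt_of_le huv with rfl | h
  · simp
  have hs : slope f u v = (f v - f u) / (v - u) := slope_def_field f u v
  have hvu : (0:ℝ) < v - u := by linarith
  have h1 := leftDeriv_le_slope hf h
  have h2 := slope_le_leftDeriv hf h
  rw [hs] at h1 h2
  constructor
  · calc leftDeriv f u * (v - u) ≤ ((f v - f u) / (v - u)) * (v - u) := by
          exact mul_le_mul_of_nonneg_right h1 hvu.le
      _ = f v - f u := by field_simp
  · calc f v - f u = ((f v - f u) / (v - u)) * (v - u) := by field_simp
      _ ≤ leftDeriv f v * (v - u) := mul_le_mul_of_nonneg_right h2 hvu.le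

lemma leftDeriv_integral_sandwich {f : ℝ → ℝ} (hf : ConvexOn ℝ Set.univ f) {u v : ℝ}
    (huv : u ≤ v) :
    leftDeriv f u * (v - u) ≤ (∫ s in u..v, leftDeriv f s) ∧
      (∫ s in u..v, leftDeriv f s) ≤ leftDeriv f v * (v - u) := by
  have hint : IntervalIntegrable (leftDeriv f) volume u v :=
    (leftDeriv_mono hf).intervalIntegrable
  have hc : ∀ c : ℝ, (∫ _ in u..v, c) = c * (v - u) := by
    intro c; rw [intervalIntegral.integral_const]; ring_nf
  constructor
  · rw [← hc]
    apply intervalIntegral.integral_mono_on huv intervalIntegrable_const hint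
    intro s hs; exact leftDeriv_mono hf hs.1
  · rw [← hc]
    apply intervalIntegral.integral_mono_on huv hint intervalIntegrable_const
    intro s hs; exact leftDeriv_mono hf hs.2

lemma leftDeriv_ftc {f : ℝ → ℝ} (hf : ConvexOn ℝ Set.univ f) {a b : ℝ} (hab : a ≤ b) :
    (∫ s in a..b, leftDeriv f s) = f b - f a := by
  set g := leftDeriv f with hg
  have key : ∀ n : ℕ, 0 < n →
      |(f b - f a) - ∫ s in a..b, g s| ≤ (g b - g a) * (b - a) / n := by
    intro n hn
    set δ : ℝ := (b - a) / n with hδ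
    have hδ0 : 0 ≤ δ := div_nonneg (by linarith) (Nat.cast_nonneg n)
    set t : ℕ → ℝ := fun i => a + i * δ with ht
    have hmono : ∀ i : ℕ, t i ≤ t (i + 1) := by
      intro i; simp only [ht]; push_cast; nlinarith
    have ht0 : t 0 = a := by simp [ht]
    have htn : t n = b := by
      simp only [ht, hδ]
      field_simp
      ring
    have hint : ∀ i, IntervalIntegrable g volume (t i) (t (i + 1)) :=
      fun i => (leftDeriv_mono hf).intervalIntegrable
    have hsum1 : (f b - f a) = ∑ i ∈ Finset.range n, (f (t (i+1)) - f (t i)) := by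
      rw [Finset.sum_range_sub (fun i => f (t i)) n, ht0, htn]
    have hsum2 : (∫ s in a..b, g s) = ∑ i ∈ Finset.range n, ∫ s in (t i)..(t (i+1)), g s := by
      rw [← ht0, ← htn]
      exact (intervalIntegral.sum_integral_adjacent_intervals (fun i _ => hint i)).symm
    have hstep : ∀ i : ℕ, |(f (t (i+1)) - f (t i)) - ∫ s in (t i)..(t (i+1)), g s| ≤
        (g (t (i+1)) - g (t i)) * δ := by
      intro i
      have h1 := leftDeriv_sandwich hf (hmono i)
      have h2 := leftDeriv_integral_sandwich hf (hmono i)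
      have hd : t (i+1) - t i = δ := by simp only [ht]; push_cast; ring
      rw [hd] at h1 h2
      rw [abs_le]
      constructor <;> nlinarith [h1.1, h1.2, h2.1, h2.2]
    calc |(f b - f a) - ∫ s in a..b, g s|
        = |∑ i ∈ Finset.range n, ((f (t (i+1)) - f (t i)) - ∫ s in (t i)..(t (i+1)), g s)| := by
          rw [hsum1, hsum2]
          congr 1
          rw [← Finset.sum_sub_distrib]
      _ ≤ ∑ i ∈ Finset.range n, |(f (t (i+1)) - f (t i)) - ∫ s in (t i)..(t (i+1)), g s| :=
          Finset.abs_sum_le_sum_abs _ _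
      _ ≤ ∑ i ∈ Finset.range n, (g (t (i+1)) - g (t i)) * δ :=
          Finset.sum_le_sum (fun i _ => hstep i)
      _ = (g b - g a) * δ := by
          rw [← Finset.sum_mul, Finset.sum_range_sub (fun i => g (t i)) n, ht0, htn]
      _ = (g b - g a) * (b - a) / n := by rw [hδ]; ring
  have hzero : (f b - f a) - (∫ s in a..b, g s) = 0 := by
    by_contra hne
    have habs : 0 < |(f b - f a) - ∫ s in a..b, g s| := abs_pos.mpr hne
    set c := |(f b - f a) - ∫ s in a..b, g s|
    set K := (g b - g a) * (b - a) with hK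
    have hK0 : 0 ≤ K := mul_nonneg (by
      have := leftDeriv_mono hf hab; linarith) (by linarith)
    obtain ⟨n, hn⟩ := exists_nat_gt (K / c)
    have hn0 : 0 < n := by
      by_contra h
      push_neg at h
      interval_cases n
      · simp at hn; nlinarith [div_nonneg hK0 habs.le]
    have := key n hn0
    have hnc : K / c < n := hn
    have : c ≤ K / n := this
    have hnpos : (0:ℝ) < n := Nat.cast_pos.mpr hn0
    rw [div_lt_iff₀ habs] at hnc
    rw [le_div_iff₀ hnpos] at this
    nlinarith
  linarith [hzero]

lemma integral_zero_of_Ico_degenerate (μ : Measure ℝ)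
    (h : ∀ a b : ℝ, a ≤ b → μ (Set.Ico a b) = 0 ∨ μ (Set.Ico a b) = ⊤)
    (φ : ℝ → ℝ) (hφc : Continuous φ) : ∫ x, φ x ∂μ = 0 := by
  by_cases hInt : Integrable φ μ
  · have hfin : ∫⁻ a, ‖φ a‖₊ ∂μ < ⊤ := hInt.2
    have hcover : ∀ x : ℝ, φ x ≠ 0 → ∃ p q : ℚ, x ∈ Set.Ico (p:ℝ) q ∧ μ (Set.Ico (p:ℝ) q) = 0 := by
      intro x hx
      set ε := |φ x| / 2 with hε
      have hε0 : 0 < ε := by positivity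
      have hU : IsOpen {y : ℝ | ε < |φ y|} := isOpen_lt continuous_const hφc.abs
      have hxU : x ∈ {y : ℝ | ε < |φ y|} := by
        simp only [Set.mem_setOf_eq, hε]
        have : 0 < |φ x| := abs_pos.mpr hx
        linarith
      obtain ⟨δ, hδ0, hball⟩ := Metric.isOpen_iff.mp hU x hxU
      obtain ⟨p, hp1, hp2⟩ := exists_rat_btwn (show x - δ < x by linarith)
      obtain ⟨q, hq1, hq2⟩ := exists_rat_btwn (show x < x + δ by linarith)
      have hsub : Set.Ico (p:ℝ) q ⊆ {y : ℝ | ε < |φ y|} := by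
        intro y hy
        apply hball
        rw [Metric.mem_ball, Real.dist_eq, abs_lt]
        constructor <;> [nlinarith [hy.1]; nlinarith [hy.2]]
      have hpq : (p:ℝ) ≤ q := by linarith
      refine ⟨p, q, ⟨hp2.le, hq1⟩, ?_⟩
      rcases h p q hpq with h0 | htop
      · exact h0
      · exfalso
        have : (ENNReal.ofReal ε) * μ (Set.Ico (p:ℝ) q) ≤ ∫⁻ a, ‖φ a‖₊ ∂μ := by
          calc (ENNReal.ofReal ε) * μ (Set.Ico (p:ℝ) q)
              = ∫⁻ _ in Set.Ico (p:ℝ) q, ENNReal.ofReal ε ∂μ := by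
                rw [setLIntegral_const]
            _ ≤ ∫⁻ a in Set.Ico (p:ℝ) q, ‖φ a‖₊ ∂μ := by
                apply setLIntegral_mono hφc.measurable.nnnorm.coe_nnreal_ennreal
                intro a ha
                have := hsub ha
                simp only [Set.mem_setOf_eq] at this
                rw [← ENNReal.ofReal_coe_nnreal, coe_nnnorm, Real.norm_eq_abs]
                exact ENNReal.ofReal_le_ofReal this.le
            _ ≤ ∫⁻ a, ‖φ a‖₊ ∂μ := setLIntegral_le_lintegral _ _
        rw [htop, ENNReal.mul_top (by simp [ENNReal.ofReal_eq_zero, not_le, hε0])] at this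
        exact absurd (lt_of_le_of_lt this hfin) (by simp)
    have hnull : μ {x | φ x ≠ 0} = 0 := by
      have hsub : {x | φ x ≠ 0} ⊆
          ⋃ (r : ℚ × ℚ) (_ : μ (Set.Ico (r.1:ℝ) r.2) = 0), Set.Ico (r.1:ℝ) r.2 := by
        intro x hx
        obtain ⟨p, q, hmem, h0⟩ := hcover x hx
        exact Set.mem_iUnion.mpr ⟨(p, q), Set.mem_iUnion.mpr ⟨h0, hmem⟩⟩
      refine measure_mono_null hsub ?_
      exact measure_iUnion_null fun r => measure_iUnion_null fun h0 => h0
    have hae : φ =ᵐ[μ] 0 := by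
      rw [Filter.EventuallyEq, ae_iff]
      simpa using hnull
    simp [integral_congr_ae hae]
  · exact integral_undef hInt

section Phi
variable {φ : ℝ → ℝ} (hφ : ContDiff ℝ 2 φ)
include hφ

lemma phi_diff : Differentiable ℝ φ := hφ.differentiable (by norm_num)

lemma phi_cd1 : ContDiff ℝ 1 (deriv φ) := by
  have h2 : ContDiff ℝ ((1:ℕ) + 1) φ := by exact_mod_cast hφ
  exact (contDiff_succ_iff_deriv.mp h2).2.2

lemma phi_diff2 : Differentiable ℝ (deriv φ) := (phi_cd1 hφ).differentiable one_ne_zero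

lemma phi_cont2 : Continuous (deriv (deriv φ)) := by
  have h1 : ContDiff ℝ ((0:ℕ) + 1) (deriv φ) := by exact_mod_cast phi_cd1 hφ
  exact (contDiff_succ_iff_deriv.mp h1).2.2.continuous

lemma phi_rep {t M : ℝ} (htM : t ≤ M) (hM : φ M = 0) (hM' : deriv φ M = 0) :
    (∫ x in t..M, (x - t) * deriv (deriv φ) x) = φ t := by
  have hder : ∀ x ∈ Set.uIcc t M, HasDerivAt (fun x => (x - t) * deriv φ x - φ x)
      ((x - t) * deriv (deriv φ) x) x := by
    intro x _
    have h1 : HasDerivAt (fun x => (x - t) * deriv φ x)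
        (1 * deriv φ x + (x - t) * deriv (deriv φ) x) x :=
      ((hasDerivAt_id x).sub_const t).mul ((phi_diff2 hφ) x).hasDerivAt
    have : HasDerivAt (fun x => (x - t) * deriv φ x - φ x)
        (1 * deriv φ x + (x - t) * deriv (deriv φ) x - deriv φ x) x :=
      h1.sub ((phi_diff hφ) x).hasDerivAt
    convert this using 1
    ring
  have hint : IntervalIntegrable (fun x => (x - t) * deriv (deriv φ) x) volume t M :=
    (Continuous.mul (by continuity) (phi_cont2 hφ)).intervalIntegrable t M
  rw [intervalIntegral.integral_eq_sub_of_hasDerivAt hder hint]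
  simp [hM, hM']

lemma phi_affine_int {a b c d : ℝ} (ha : φ a = 0) (ha' : deriv φ a = 0)
    (hb : φ b = 0) (hb' : deriv φ b = 0) :
    (∫ x in a..b, deriv (deriv φ) x * (c * x + d)) = 0 := by
  have hder : ∀ x ∈ Set.uIcc a b, HasDerivAt (fun x => deriv φ x * (c * x + d) - c * φ x)
      (deriv (deriv φ) x * (c * x + d)) x := by
    intro x _
    have hlin : HasDerivAt (fun x : ℝ => c * x + d) c x := by
      simpa using ((hasDerivAt_id x).const_mul c).add_const d
    have h1 : HasDerivAt (fun x => deriv φ x * (c * x + d))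
        (deriv (deriv φ) x * (c * x + d) + deriv φ x * c) x :=
      ((phi_diff2 hφ) x).hasDerivAt.mul hlin
    have : HasDerivAt (fun x => deriv φ x * (c * x + d) - c * φ x)
        (deriv (deriv φ) x * (c * x + d) + deriv φ x * c - c * deriv φ x) x :=
      h1.sub (((phi_diff hφ) x).hasDerivAt.const_mul c)
    convert this using 1
    ring
  have hint : IntervalIntegrable (fun x => deriv (deriv φ) x * (c * x + d)) volume a b :=
    (Continuous.mul (phi_cont2 hφ) (by continuity)).intervalIntegrable a b
  rw [intervalIntegral.integral_eq_sub_of_hasDerivAt hder hint]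
  simp [ha, ha', hb, hb']

end Phi

lemma nu_eq {f : ℝ → ℝ} (hf : ConvexOn ℝ Set.univ f) (μ : Measure ℝ)
    (hμ : ∀ a b : ℝ, a ≤ b → (μ (Set.Ico a b)).toReal = leftDeriv f b - leftDeriv f a)
    (hfin : ∀ a b : ℝ, a ≤ b → μ (Set.Ico a b) ≠ ⊤)
    {M x : ℝ} (hMx : -M ≤ x) (hxM : x ≤ M) :
    (∫ t in Set.Ico (-M) M, max (x - t) 0 ∂μ)
      = f x - f (-M) - leftDeriv f (-M) * (x + M) := by
  set g := leftDeriv f with hg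
  set I : Set ℝ := Set.Ico (-M) M with hI
  have hIm : MeasurableSet I := measurableSet_Ico
  have hMM : -M ≤ M := le_trans hMx hxM
  haveI : IsFiniteMeasure (μ.restrict I) := by
    constructor
    rw [Measure.restrict_apply_univ]
    exact lt_top_iff_ne_top.mpr (hfin _ _ hMM)
  -- step 4a : rewrite the integrand as an integral of an indicator
  have h4a : ∀ t ∈ I, max (x - t) 0
      = ∫ s in Set.Ico (-M) x, Set.indicator (Set.Ici t) (fun _ => (1:ℝ)) s := by
    intro t ht
    rw [setIntegral_indicator measurableSet_Ici]
    have hinter : Set.Ico (-M) x ∩ Set.Ici t = Set.Ico t x := by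
      ext s
      simp only [Set.mem_inter_iff, Set.mem_Ico, Set.mem_Ici]
      constructor
      · rintro ⟨⟨_, h2⟩, h3⟩; exact ⟨h3, h2⟩
      · rintro ⟨h1, h2⟩; exact ⟨⟨le_trans ht.1 h1, h2⟩, h1⟩
    rw [hinter]
    simp only [integral_const, Measure.real, MeasurableSet.univ, Measure.restrict_apply, Set.univ_inter,
      Real.volume_Ico, smul_eq_mul, mul_one]
    rcases le_or_gt t x with h | h
    · rw [ENNReal.toReal_ofReal (by linarith), max_eq_left (by linarith)]
    · rw [max_eq_right (by linarith)]
      rw [ENNReal.ofReal_eq_zero.mpr (by linarith)]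
      simp
  have hstep1 : (∫ t in I, max (x - t) 0 ∂μ)
      = ∫ t in I, (∫ s in Set.Ico (-M) x,
          Set.indicator (Set.Ici t) (fun _ => (1:ℝ)) s) ∂μ :=
    setIntegral_congr_fun hIm (fun t ht => h4a t ht)
  -- Fubini
  have hmeas : MeasurableSet {p : ℝ × ℝ | p.1 ≤ p.2} :=
    (isClosed_le continuous_fst continuous_snd).measurableSet
  have hFint : Integrable (fun p : ℝ × ℝ => Set.indicator {p : ℝ × ℝ | p.1 ≤ p.2}
      (fun _ => (1:ℝ)) p) ((μ.restrict I).prod (volume.restrict (Set.Ico (-M) x))) := by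
    have hmeasF : AEStronglyMeasurable (fun p : ℝ × ℝ => Set.indicator {p : ℝ × ℝ | p.1 ≤ p.2}
        (fun _ => (1:ℝ)) p) ((μ.restrict I).prod (volume.restrict (Set.Ico (-M) x))) :=
      ((measurable_const.indicator hmeas)).aestronglyMeasurable
    refine ⟨hmeasF, ?_⟩
    apply HasFiniteIntegral.mono' (g := fun _ => (1:ℝ))
      (hasFiniteIntegral_const 1)
    filter_upwards with p
    rw [Set.indicator_apply]
    split <;> simp
  have hswap := integral_integral_swap (f := fun t s => Set.indicator (Set.Ici t)
      (fun _ => (1:ℝ)) s) (μ := μ.restrict I) (ν := volume.restrict (Set.Ico (-M) x)) ?_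
  swap
  · have : (fun z : ℝ × ℝ => Set.indicator (Set.Ici z.1) (fun _ => (1:ℝ)) z.2)
        = fun p : ℝ × ℝ => Set.indicator {p : ℝ × ℝ | p.1 ≤ p.2} (fun _ => (1:ℝ)) p := by
      ext z
      simp only [Set.indicator_apply, Set.mem_Ici, Set.mem_setOf_eq]
    rw [Function.uncurry_def, this]
    exact hFint
  rw [hstep1, hswap]
  -- step 4c : compute the inner integral
  have h4c : ∀ s, (∫ t in I, Set.indicator (Set.Ici t) (fun _ => (1:ℝ)) s ∂μ)
      = (μ (Set.Iic s ∩ I)).toReal := by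
    intro s
    have : (fun t => Set.indicator (Set.Ici t) (fun _ => (1:ℝ)) s)
        = fun t => Set.indicator (Set.Iic s) (fun _ => (1:ℝ)) t := by
      ext t
      simp only [Set.indicator_apply, Set.mem_Ici, Set.mem_Iic]
    rw [this, setIntegral_indicator measurableSet_Iic, integral_const]
    simp [Measure.restrict_apply_univ, Set.inter_comm]
    rfl
  have hbad : Set.Countable {s : ℝ | ¬ContinuousAt g s} :=
    (leftDeriv_mono hf).countable_not_continuousAt
  have h4d : ∀ᵐ s, s ∈ Set.Ico (-M) x → (μ (Set.Iic s ∩ I)).toReal = g s - g (-M) := by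
    filter_upwards [compl_mem_ae_iff.mpr (hbad.measure_zero volume)] with s hs hsmem
    simp only [Set.mem_compl_iff, Set.mem_setOf_eq, not_not] at hs
    have hsM : s < M := lt_of_lt_of_le hsmem.2 hxM
    have hinter : Set.Iic s ∩ I = Set.Icc (-M) s := by
      ext u
      simp only [Set.mem_inter_iff, Set.mem_Iic, hI, Set.mem_Ico, Set.mem_Icc]
      constructor
      · rintro ⟨h1, h2, _⟩; exact ⟨h2, h1⟩
      · rintro ⟨h1, h2⟩; exact ⟨h2, h1, lt_of_le_of_lt h2 hsM⟩
    rw [hinter]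
    -- the point s has zero measure since g is continuous at s
    have hpoint : μ {s} = 0 := by
      have hseq : Filter.Tendsto (fun n : ℕ => ENNReal.ofReal (g (s + 1/(n+1)) - g s))
          Filter.atTop (nhds 0) := by
        rw [show (0 : ENNReal) = ENNReal.ofReal (g s - g s) by simp]
        apply (ENNReal.continuous_ofReal.tendsto _).comp
        apply Filter.Tendsto.sub_const
        apply hs.tendsto.comp
        have : Filter.Tendsto (fun n : ℕ => s + 1/((n:ℝ)+1)) Filter.atTop (nhds (s + 0)) :=
          Filter.Tendsto.const_add s tendsto_one_div_add_atTop_nhds_zero_nat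
        simpa using this
      have hub : ∀ n : ℕ, μ {s} ≤ ENNReal.ofReal (g (s + 1/(n+1)) - g s) := by
        intro n
        have h1n : (0:ℝ) < 1/((n:ℝ)+1) := by positivity
        have hle : s ≤ s + 1/((n:ℝ)+1) := by linarith
        have hsub : {s} ⊆ Set.Ico s (s + 1/(n+1)) := by
          intro u hu
          rw [Set.mem_singleton_iff] at hu
          subst hu
          exact ⟨le_rfl, by linarith⟩
        calc μ {s} ≤ μ (Set.Ico s (s + 1/(n+1))) := measure_mono hsub
          _ = ENNReal.ofReal (g (s + 1/(n+1)) - g s) := by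
              rw [← hμ s _ hle, ENNReal.ofReal_toReal (hfin _ _ hle)]
      exact le_antisymm (ge_of_tendsto hseq (Filter.Eventually.of_forall hub)) zero_le
    have hIccIco : μ (Set.Icc (-M) s) = μ (Set.Ico (-M) s) := by
      apply le_antisymm
      · rw [← Set.Ico_union_right (le_trans hsmem.1 le_rfl)]
        calc μ (Set.Ico (-M) s ∪ {s}) ≤ μ (Set.Ico (-M) s) + μ {s} := measure_union_le _ _
          _ = μ (Set.Ico (-M) s) := by rw [hpoint, add_zero]
      · exact measure_mono Set.Ico_subset_Icc_self
    rw [hIccIco, hμ _ _ hsmem.1]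
  rw [setIntegral_congr_fun measurableSet_Ico (fun s _ => h4c s)]
  rw [setIntegral_congr_ae measurableSet_Ico h4d]
  -- step 4e : compute the Lebesgue integral
  have hint_g : IntervalIntegrable g volume (-M) x := (leftDeriv_mono hf).intervalIntegrable
  have : (∫ s in Set.Ico (-M) x, (g s - g (-M)))
      = ∫ s in (-M)..x, (g s - g (-M)) := by
    rw [intervalIntegral.integral_of_le hMx, integral_Ico_eq_integral_Ioo,
      integral_Ioc_eq_integral_Ioo]
  rw [this, intervalIntegral.integral_sub hint_g intervalIntegrable_const,
    leftDeriv_ftc hf hMx, intervalIntegral.integral_const]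
  simp only [smul_eq_mul]
  ring


/-- for a convex f and φ ∈ C²_c(ℝ), ∫ φ'' f dx = ∫ φ dμ, where μ is the
Lebesgue–Stieltjes measure of the left derivative of f, i.e. μ[a,b) = f'_−(b) − f'_−(a). -/
theorem convex_second_derivative_measure
    (f : ℝ → ℝ) (hf : ConvexOn ℝ Set.univ f)
    (μ : Measure ℝ)
    (hμ : ∀ a b : ℝ, a ≤ b → (μ (Set.Ico a b)).toReal = leftDeriv f b - leftDeriv f a)
    (φ : ℝ → ℝ) (hφ : ContDiff ℝ 2 φ) (hsupp : HasCompactSupport φ) :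
    ∫ x, deriv (deriv φ) x * f x = ∫ x, φ x ∂μ := by
  classical
  set g := leftDeriv f with hg
  have hfc : Continuous f := by
    rw [← continuousOn_univ]
    exact ConvexOn.continuousOn isOpen_univ hf
  -- choose M with tsupport φ ⊆ Ioo (-M) M
  obtain ⟨R, hR⟩ := hsupp.isBounded.subset_closedBall 0
  set M : ℝ := |R| + 1 with hM
  have hM0 : 0 < M := by positivity
  have hKM : tsupport φ ⊆ Set.Ioo (-M) M := by
    intro y hy
    have := hR hy
    rw [Metric.mem_closedBall, Real.dist_eq, sub_zero] at this
    have h1 : |y| ≤ |R| := le_trans this (le_abs_self R)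
    rw [abs_le] at h1
    constructor <;> [linarith [h1.1]; linarith [h1.2]]
  have hts1 : tsupport (deriv φ) ⊆ tsupport φ :=
    closure_minimal (support_deriv_subset) (isClosed_tsupport φ)
  have hts2 : tsupport (deriv (deriv φ)) ⊆ tsupport φ :=
    (closure_minimal (support_deriv_subset) (isClosed_tsupport (deriv φ))).trans hts1
  have hφ0 : ∀ y, y ∉ Set.Ioo (-M) M → φ y = 0 := fun y hy =>
    image_eq_zero_of_notMem_tsupport (fun hmem => hy (hKM hmem))
  have hφ'0 : ∀ y, y ∉ Set.Ioo (-M) M → deriv φ y = 0 := fun y hy =>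
    image_eq_zero_of_notMem_tsupport (fun hmem => hy (hKM (hts1 hmem)))
  have hφ''0 : ∀ y, y ∉ Set.Ioo (-M) M → deriv (deriv φ) y = 0 := fun y hy =>
    image_eq_zero_of_notMem_tsupport (fun hmem => hy (hKM (hts2 hmem)))
  have hMnot : (M : ℝ) ∉ Set.Ioo (-M) M := by simp
  have hMnot' : (-M : ℝ) ∉ Set.Ioo (-M) M := by simp
  have hMM : -M ≤ M := by linarith
  by_cases hfin : ∀ a b : ℝ, a ≤ b → μ (Set.Ico a b) ≠ ⊤
  · -- main case : μ locally finite
    set I : Set ℝ := Set.Ico (-M) M with hI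
    haveI : IsFiniteMeasure (μ.restrict I) := by
      constructor
      rw [Measure.restrict_apply_univ]
      exact lt_top_iff_ne_top.mpr (hfin _ _ hMM)
    set J : Set ℝ := Set.Ioc (-M) M with hJ
    -- RHS = ∫_I φ dμ
    have hRHS1 : ∫ x, φ x ∂μ = ∫ t in I, φ t ∂μ := by
      refine (setIntegral_eq_integral_of_forall_compl_eq_zero (fun t ht => ?_)).symm
      exact hφ0 t (fun hmem => ht ⟨hmem.1.le, hmem.2⟩)
    -- step 2 : representation of φ on I
    have hrep : ∀ t ∈ I, φ t = ∫ x in J, max (x - t) 0 * deriv (deriv φ) x := by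
      intro t ht
      have htM : t ≤ M := ht.2.le
      have hcont : Continuous (fun x => max (x - t) 0 * deriv (deriv φ) x) :=
        (continuous_id.sub continuous_const).max continuous_const |>.mul (phi_cont2 hφ)
      have hsplit : (∫ x in J, max (x - t) 0 * deriv (deriv φ) x)
          = (∫ x in (-M)..t, max (x - t) 0 * deriv (deriv φ) x)
            + ∫ x in t..M, max (x - t) 0 * deriv (deriv φ) x := by
        rw [← intervalIntegral.integral_of_le hMM,
          ← intervalIntegral.integral_add_adjacent_intervals
            (hcont.intervalIntegrable _ _) (hcont.intervalIntegrable _ _)]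
      have hz : (∫ x in (-M)..t, max (x - t) 0 * deriv (deriv φ) x) = 0 := by
        have heq : Set.EqOn (fun x => max (x - t) 0 * deriv (deriv φ) x) (fun _ => (0:ℝ))
            (Set.uIcc (-M) t) := by
          intro x hx
          rw [Set.uIcc_of_le ht.1] at hx
          simp only
          rw [max_eq_right (by linarith [hx.2])]
          ring
        rw [intervalIntegral.integral_congr heq]
        simp
      have hrest : (∫ x in t..M, max (x - t) 0 * deriv (deriv φ) x)
          = ∫ x in t..M, (x - t) * deriv (deriv φ) x := by
        apply intervalIntegral.integral_congr
        intro x hx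
        rw [Set.uIcc_of_le htM] at hx
        simp only
        rw [max_eq_left (by linarith [hx.1])]
      rw [hsplit, hz, hrest, phi_rep hφ htM (hφ0 M hMnot) (hφ'0 M hMnot), zero_add]
    -- bound for φ''
    obtain ⟨C, hC⟩ := (hsupp.deriv.deriv).exists_bound_of_continuous (phi_cont2 hφ)
    have hC0 : 0 ≤ C := le_trans (norm_nonneg _) (hC 0)
    have hIm : MeasurableSet I := measurableSet_Ico
    have hJm : MeasurableSet J := measurableSet_Ioc
    have hcontF : Continuous (fun z : ℝ × ℝ => max (z.2 - z.1) 0 * deriv (deriv φ) z.2) :=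
      ((continuous_snd.sub continuous_fst).max continuous_const).mul
        ((phi_cont2 hφ).comp continuous_snd)
    have hFint : Integrable (fun z : ℝ × ℝ => max (z.2 - z.1) 0 * deriv (deriv φ) z.2)
        ((μ.restrict I).prod (volume.restrict J)) := by
      refine ⟨hcontF.aestronglyMeasurable, ?_⟩
      apply HasFiniteIntegral.mono' (g := fun _ => 2 * M * C) (hasFiniteIntegral_const _)
      have hae1 : ∀ᵐ z : ℝ × ℝ ∂((μ.restrict I).prod (volume.restrict J)), z.1 ∈ I := by
        rw [ae_iff]
        have hset : {z : ℝ × ℝ | ¬ z.1 ∈ I} = Iᶜ ×ˢ (Set.univ : Set ℝ) := by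
          ext z; simp [Set.mem_prod]
        rw [hset, Measure.prod_prod, Measure.restrict_apply hIm.compl]
        simp
      have hae2 : ∀ᵐ z : ℝ × ℝ ∂((μ.restrict I).prod (volume.restrict J)), z.2 ∈ J := by
        rw [ae_iff]
        have hset : {z : ℝ × ℝ | ¬ z.2 ∈ J} = (Set.univ : Set ℝ) ×ˢ Jᶜ := by
          ext z; simp [Set.mem_prod]
        rw [hset, Measure.prod_prod, Measure.restrict_apply hJm.compl]
        simp
      filter_upwards [hae1, hae2] with z hz1 hz2
      have h1 : |max (z.2 - z.1) 0| ≤ 2 * M := by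
        rw [abs_of_nonneg (le_max_right _ _)]
        rcases le_total (z.2 - z.1) 0 with h | h
        · rw [max_eq_right h]; linarith
        · rw [max_eq_left h]
          have := hz1.1
          have := hz2.2
          simp only [hI, Set.mem_Ico] at hz1
          simp only [hJ, Set.mem_Ioc] at hz2
          linarith [hz1.1, hz2.2]
      calc ‖max (z.2 - z.1) 0 * deriv (deriv φ) z.2‖
          = |max (z.2 - z.1) 0| * ‖deriv (deriv φ) z.2‖ := by
            rw [Real.norm_eq_abs, abs_mul, Real.norm_eq_abs]
        _ ≤ (2 * M) * C := mul_le_mul h1 (hC z.2) (norm_nonneg _) (by linarith)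
        _ = 2 * M * C := by ring
    have hFint' : Integrable
        (Function.uncurry (fun t x : ℝ => max (x - t) 0 * deriv (deriv φ) x))
        ((μ.restrict I).prod (volume.restrict J)) := by
      have : Function.uncurry (fun t x : ℝ => max (x - t) 0 * deriv (deriv φ) x)
          = fun z : ℝ × ℝ => max (z.2 - z.1) 0 * deriv (deriv φ) z.2 := rfl
      rw [this]
      exact hFint
    have hswap := integral_integral_swap hFint'
    have hRHS2 : (∫ t in I, φ t ∂μ)
        = ∫ x in J, (∫ t in I, max (x - t) 0 ∂μ) * deriv (deriv φ) x := by
      rw [setIntegral_congr_fun hIm (fun t ht => hrep t ht), hswap]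
      apply setIntegral_congr_fun hJm
      intro x _
      exact integral_mul_const _ _
    have hRHS3 : (∫ t in I, φ t ∂μ)
        = ∫ x in J, (f x - f (-M) - g (-M) * (x + M)) * deriv (deriv φ) x := by
      rw [hRHS2]
      apply setIntegral_congr_fun hJm
      intro x hx
      simp only [hJ, Set.mem_Ioc] at hx
      have hnu := nu_eq hf μ hμ hfin hx.1.le hx.2
      simp only [hI]
      rw [hnu]
    -- LHS
    have hLHS1 : (∫ x, deriv (deriv φ) x * f x) = ∫ x in J, deriv (deriv φ) x * f x := by
      refine (setIntegral_eq_integral_of_forall_compl_eq_zero (fun x hx => ?_)).symm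
      rw [hφ''0 x (fun hmem => hx ⟨hmem.1, hmem.2.le⟩)]
      ring
    set c := g (-M) with hc
    set d := f (-M) + c * M with hd
    have hIntJ1 : IntegrableOn (fun x => deriv (deriv φ) x * f x) J volume :=
      ((phi_cont2 hφ).mul hfc).integrableOn_Ioc
    have hIntJ2 : IntegrableOn (fun x => deriv (deriv φ) x * (c * x + d)) J volume :=
      ((phi_cont2 hφ).mul ((continuous_const.mul continuous_id).add continuous_const)).integrableOn_Ioc
    have haffine : (∫ x in J, deriv (deriv φ) x * (c * x + d)) = 0 := by
      rw [← intervalIntegral.integral_of_le hMM]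
      exact phi_affine_int hφ (hφ0 _ hMnot') (hφ'0 _ hMnot') (hφ0 _ hMnot) (hφ'0 _ hMnot)
    rw [hLHS1, hRHS1, hRHS3]
    have hcalc : (∫ x in J, (f x - f (-M) - g (-M) * (x + M)) * deriv (deriv φ) x)
        = (∫ x in J, deriv (deriv φ) x * f x) - ∫ x in J, deriv (deriv φ) x * (c * x + d) := by
      rw [← integral_sub hIntJ1 hIntJ2]
      apply setIntegral_congr_fun hJm
      intro x _
      simp only [hc, hd]
      ring
    rw [hcalc, haffine, sub_zero]
  · -- degenerate case : some interval has infinite measure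
    push_neg at hfin
    obtain ⟨a, b, hab, htop⟩ := hfin
    have key : ∀ u v : ℝ, u ≤ v → g u = g v := by
      intro u v huv
      set a' := min u a with ha'
      set b' := max v b with hb'
      have hab' : a' ≤ b' := le_trans (min_le_right u a) (le_trans hab (le_max_right v b))
      have h1 : μ (Set.Ico a' b') = ⊤ := by
        refine top_le_iff.mp ?_
        rw [← htop]
        exact measure_mono (Set.Ico_subset_Ico (min_le_right u a) (le_max_right v b))
      have h2 := hμ a' b' hab'
      rw [h1] at h2
      simp only [ENNReal.toReal_top] at h2
      have m1 : g a' ≤ g u := leftDeriv_mono hf (min_le_left u a)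
      have m2 : g v ≤ g b' := leftDeriv_mono hf (le_max_left v b)
      have m3 : g u ≤ g v := leftDeriv_mono hf huv
      linarith
    have hconst : ∀ s : ℝ, g s = g 0 := by
      intro s
      rcases le_total s 0 with h | h
      · exact key s 0 h
      · exact (key 0 s h).symm
    have haff : ∀ x : ℝ, f x = g 0 * x + f 0 := by
      intro x
      rcases le_total 0 x with h | h
      · have hftc := leftDeriv_ftc hf h
        rw [intervalIntegral.integral_congr (g := fun _ => g 0)
          (fun s _ => hconst s), intervalIntegral.integral_const, smul_eq_mul] at hftc
        nlinarith [hftc]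
      · have hftc := leftDeriv_ftc hf h
        rw [intervalIntegral.integral_congr (g := fun _ => g 0)
          (fun s _ => hconst s), intervalIntegral.integral_const, smul_eq_mul] at hftc
        nlinarith [hftc]
    have h0or : ∀ u v : ℝ, u ≤ v → μ (Set.Ico u v) = 0 ∨ μ (Set.Ico u v) = ⊤ := by
      intro u v huv
      rcases eq_or_ne (μ (Set.Ico u v)) ⊤ with h | h
      · exact Or.inr h
      · left
        have h2 := hμ u v huv
        rw [key u v huv, sub_self] at h2
        rcases (ENNReal.toReal_eq_zero_iff _).mp h2 with h3 | h3
        · exact h3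
        · exact absurd h3 h
    rw [integral_zero_of_Ico_degenerate μ h0or φ hφ.continuous]
    have hfun : (fun x => deriv (deriv φ) x * f x)
        = fun x => deriv (deriv φ) x * (g 0 * x + f 0) := funext fun x => by rw [haff x]
    rw [hfun]
    have hLHS1 : (∫ x, deriv (deriv φ) x * (g 0 * x + f 0))
        = ∫ x in Set.Ioc (-M) M, deriv (deriv φ) x * (g 0 * x + f 0) := by
      refine (setIntegral_eq_integral_of_forall_compl_eq_zero (fun x hx => ?_)).symm
      rw [hφ''0 x (fun hmem => hx ⟨hmem.1, hmem.2.le⟩)]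
      ring
    rw [hLHS1, ← intervalIntegral.integral_of_le hMM]
    exact phi_affine_int hφ (hφ0 _ hMnot') (hφ'0 _ hMnot') (hφ0 _ hMnot) (hφ'0 _ hMnot)
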